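/- Let λ, μ ∈ ℂ with |λ| > 1 and |μ| = 1. Then the map (S,R) ↦ (S*·H_m(λ) + μ·Δ_n·R, μ·R*·Δ_n + H_m(λ)·S), where S ∈ ℂ^{2m×n} and R ∈ ℂ^{n×2m}, is surjective onto ℂ^{n×2m} × ℂ^{2m×n}; equivalently, T(H_m(λ), μΔ_n) = ℂ^{n×2m} × ℂ^{2m×n}. -/

import Mathlib

open Matrix

/-- The `n×n` upper-triangular Jordan block with eigenvalue `l`. -/
noncomputable def Jmat (n : ℕ) (l : ℂ) : Matrix (Fin n) (Fin n) ℂ :=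
  Matrix.of fun i j =>
    if (i : ℕ) = (j : ℕ) then l
    else if (j : ℕ) = (i : ℕ) + 1 then 1 else 0

/-- The symmetric matrix `Δ_n`: (1-based) entry `(j,k)` is `1` if `j+k = n+1`,
`i` if `j+k = n+2`, and `0` otherwise. -/
noncomputable def Dmat (n : ℕ) : Matrix (Fin n) (Fin n) ℂ :=
  Matrix.of fun i j =>
    if (i : ℕ) + (j : ℕ) + 1 = n then 1
    else if (i : ℕ) + (j : ℕ) = n then Complex.I
    else 0

/-- The `2m×2m` block matrix `H_m(l) = [[0, I],[J_m(l), 0]]`. -/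
noncomputable def Hmat (m : ℕ) (l : ℂ) : Matrix (Fin m ⊕ Fin m) (Fin m ⊕ Fin m) ℂ :=
  Matrix.fromBlocks 0 1 (Jmat m l) 0

/-- `T(A) = {CᴴA + AC}`, the tangent space to the *congruence class of `A`. -/
def Tset {n : Type*} [Fintype n] (A : Matrix n n ℂ) : Set (Matrix n n ℂ) :=
  {X | ∃ C : Matrix n n ℂ, X = Cᴴ * A + A * C}

/-- `T(M,N) = {(SᴴM + NR, RᴴN + MS)}`. -/
def Tpair {p q : Type*} [Fintype p] [Fintype q]
    (M : Matrix p p ℂ) (N : Matrix q q ℂ) :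
    Set (Matrix q p ℂ × Matrix p q ℂ) :=
  {X | ∃ (S : Matrix p q ℂ) (R : Matrix q p ℂ),
      X = (Sᴴ * M + N * R, Rᴴ * N + M * S)}


open Finset

noncomputable def Nmat (n : ℕ) : Matrix (Fin n) (Fin n) ℂ :=
  Matrix.of fun i j => if (j : ℕ) = (i : ℕ) + 1 then 1 else 0

noncomputable def Fmat (n : ℕ) : Matrix (Fin n) (Fin n) ℂ :=
  Matrix.of fun i j => if (i : ℕ) + (j : ℕ) + 1 = n then 1 else 0

lemma sum_ite_nat {n : ℕ} (c : ℕ) (f : Fin n → ℂ) :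
    (∑ l : Fin n, if (l : ℕ) = c then f l else 0) = if h : c < n then f ⟨c, h⟩ else 0 := by
  split_ifs with h
  · rw [Finset.sum_eq_single (⟨c, h⟩ : Fin n)]
    · simp
    · intro l _ hl
      rw [if_neg]
      intro hc
      exact hl (Fin.ext hc)
    · simp
  · apply Finset.sum_eq_zero
    intro l _
    rw [if_neg]
    have := l.isLt
    omega

lemma Fmat_mul_apply {n : ℕ} (M : Matrix (Fin n) (Fin n) ℂ) (i j : Fin n) :
    (Fmat n * M) i j = M ⟨n - 1 - (i : ℕ), by have := i.isLt; omega⟩ j := by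
  rw [Matrix.mul_apply]
  have hi := i.isLt
  rw [Finset.sum_eq_single (⟨n - 1 - (i : ℕ), by omega⟩ : Fin n)]
  · rw [Fmat]
    simp only [Matrix.of_apply]
    rw [if_pos (by omega), one_mul]
  · intro l _ hl
    rw [Fmat]
    simp only [Matrix.of_apply]
    rw [if_neg, zero_mul]
    have hl' : (l : ℕ) ≠ n - 1 - (i : ℕ) := fun hc => hl (Fin.ext (by simpa using hc))
    have := l.isLt
    omega
  · simp

lemma Nmat_pow_apply {n : ℕ} (k : ℕ) (i j : Fin n) :
    (Nmat n ^ k) i j = if (j : ℕ) = (i : ℕ) + k then 1 else 0 := by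
  induction k generalizing j with
  | zero =>
    rw [pow_zero, Matrix.one_apply]
    have : (i = j) ↔ ((j : ℕ) = (i : ℕ) + 0) := by
      rw [Fin.ext_iff]; omega
    split_ifs with h1 h2 <;> first | rfl | omega | (exact absurd (this.2 (by assumption)) h1)
  | succ k ih =>
    rw [pow_succ, Matrix.mul_apply]
    have : ∀ l : Fin n, (Nmat n ^ k) i l * (Nmat n) l j
        = if (l : ℕ) = (i : ℕ) + k then (if (j:ℕ) = (l:ℕ) + 1 then 1 else 0) else 0 := by
      intro l
      rw [ih, Nmat]
      simp only [Matrix.of_apply]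
      split_ifs <;> simp
    rw [Finset.sum_congr rfl (fun l _ => this l), sum_ite_nat]
    have hj := j.isLt
    split_ifs with h h1 h2 h3 <;> simp_all <;> omega

lemma Nmat_pow_n {n : ℕ} : Nmat n ^ n = 0 := by
  ext i j
  rw [Nmat_pow_apply]
  have := j.isLt
  have := i.isLt
  rw [if_neg (by omega)]
  rfl

lemma Fmat_mul_Fmat {n : ℕ} : Fmat n * Fmat n = 1 := by
  ext i j
  rw [Fmat_mul_apply, Fmat, Matrix.one_apply]
  simp only [Matrix.of_apply]
  have hi := i.isLt; have hj := j.isLt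
  have : ((⟨n - 1 - (i : ℕ), by omega⟩ : Fin n) : ℕ) + (j : ℕ) + 1 = n ↔ i = j := by
    rw [Fin.ext_iff]; simp; omega
  split_ifs with h1 h2 h2 <;> first | rfl | (exact absurd (this.1 h1) h2) | (exact absurd (this.2 h2) h1)

lemma Dmat_eq {n : ℕ} : Dmat n = Fmat n * (1 + Complex.I • Nmat n) := by
  ext i j
  rw [Fmat_mul_apply]
  have hi := i.isLt; have hj := j.isLt
  simp only [Dmat, Nmat, Matrix.add_apply, Matrix.one_apply, Matrix.smul_apply, Matrix.of_apply,
    Fin.ext_iff, smul_eq_mul]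
  split_ifs <;> first | rfl | omega | simp | (exfalso; omega)

lemma Dmat_conjTranspose {n : ℕ} : (Dmat n)ᴴ = Fmat n * (1 - Complex.I • Nmat n) := by
  ext i j
  rw [Fmat_mul_apply]
  have hi := i.isLt; have hj := j.isLt
  simp only [Dmat, Nmat, Matrix.sub_apply, Matrix.one_apply, Matrix.smul_apply, Matrix.of_apply,
    Matrix.conjTranspose_apply, Fin.ext_iff, smul_eq_mul]
  split_ifs <;> first | rfl | omega | simp | (exfalso; omega) | (simp [Complex.ext_iff])

lemma unit_scalar_add_nilpotent {p : Type*} [Fintype p] [DecidableEq p] {c : ℂ} (hc : c ≠ 0)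
    (M : Matrix p p ℂ) (hM : IsNilpotent M) : IsUnit (c • (1 : Matrix p p ℂ) + M) := by
  have hu : IsUnit (c • (1 : Matrix p p ℂ)) := by
    have := (isUnit_iff_ne_zero.2 hc).map (algebraMap ℂ (Matrix p p ℂ))
    rwa [Algebra.algebraMap_eq_smul_one] at this
  exact IsNilpotent.isUnit_add_left_of_commute hM hu (by
    show M * (c • 1) = (c • 1) * M
    rw [Matrix.mul_smul, Matrix.smul_mul, Matrix.mul_one, Matrix.one_mul])

lemma sylv {p q : Type*} [Fintype p] [Fintype q] [DecidableEq p] [DecidableEq q]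
    (A : Matrix p p ℂ) (Bq : Matrix q q ℂ) (X : Matrix p q ℂ) (c : ℂ)
    (h : A * X = X * Bq) (t : ℕ) :
    (A - c • 1) ^ t * X = X * (Bq - c • 1) ^ t := by
  induction t with
  | zero => simp
  | succ t ih =>
    have h1 : (A - c • 1) * X = X * (Bq - c • 1) := by
      rw [Matrix.sub_mul, Matrix.mul_sub, h]
      congr 1
      simp [Matrix.smul_mul, Matrix.mul_smul]
    rw [pow_succ, pow_succ, Matrix.mul_assoc, h1, ← Matrix.mul_assoc, ih, Matrix.mul_assoc]

lemma unit_cancel {p q : Type*} [Fintype p] [Fintype q] [DecidableEq p]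
    {u : Matrix p p ℂ} (hu : IsUnit u) {X : Matrix p q ℂ}
    (h : u * X = 0) : X = 0 := by
  obtain ⟨v, hv⟩ := hu
  calc X = ((↑v⁻¹ : Matrix p p ℂ) * ↑v) * X := by rw [Units.inv_mul]; rw [Matrix.one_mul]
  _ = (↑v⁻¹ : Matrix p p ℂ) * (u * X) := by rw [Matrix.mul_assoc, hv]
  _ = 0 := by rw [h, Matrix.mul_zero]

lemma Jmat_eq {m : ℕ} (l : ℂ) : Jmat m l = l • 1 + Nmat m := by
  ext i j
  simp only [Jmat, Nmat, Matrix.add_apply, Matrix.smul_apply, Matrix.one_apply,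
    Matrix.of_apply, Fin.ext_iff, smul_eq_mul]
  split_ifs <;> simp_all

lemma Jmat_conjTranspose {m : ℕ} (l : ℂ) :
    (Jmat m l)ᴴ = (starRingEnd ℂ) l • 1 + (Nmat m)ᵀ := by
  rw [Jmat_eq, conjTranspose_add, conjTranspose_smul, conjTranspose_one]
  congr 1
  ext i j
  simp [Nmat, conjTranspose_apply, transpose_apply]

/-- For `|λ| > 1`, `|μ| = 1`: `T(H_m(λ), μΔ_n) = ℂ^{n×2m} × ℂ^{2m×n}`. -/
theorem stmt17 (m n : ℕ) (l μ : ℂ)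
    (hl : 1 < ‖l‖) (hμ : ‖μ‖ = 1)
    (B : Matrix (Fin n) (Fin m ⊕ Fin m) ℂ)
    (A : Matrix (Fin m ⊕ Fin m) (Fin n) ℂ) :
    ∃ (S : Matrix (Fin m ⊕ Fin m) (Fin n) ℂ)
      (R : Matrix (Fin n) (Fin m ⊕ Fin m) ℂ),
      B = Sᴴ * Hmat m l + (μ • Dmat n) * R ∧
      A = Rᴴ * (μ • Dmat n) + Hmat m l * S := by
  rcases Nat.eq_zero_or_pos n with hn | hn
  · subst hn
    refine ⟨0, 0, ?_, ?_⟩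
    · ext i j; exact i.elim0
    · ext i j; exact j.elim0
  obtain ⟨n', rfl⟩ : ∃ n'', n = n'' + 1 := ⟨n - 1, by omega⟩
  -- basic scalar facts
  have hμ0 : μ ≠ 0 := by
    intro h; rw [h] at hμ; simp at hμ
  have hl0 : l ≠ 0 := by
    intro h; rw [h] at hl; simp at hl; linarith
  have habsμ2 : ‖μ ^ 2‖ = 1 := by
    rw [norm_pow, hμ, one_pow]
  have hlμ2 : l - μ ^ 2 ≠ 0 := by
    intro h
    have : l = μ ^ 2 := by linear_combination h
    rw [this, habsμ2] at hl; linarith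
  have hconjl : (starRingEnd ℂ) l ≠ 0 := by
    simpa using hl0
  have h1μ2l : (1 : ℂ) - μ ^ 2 * (starRingEnd ℂ) l ≠ 0 := by
    intro h
    have h2 : (1 : ℂ) = μ ^ 2 * (starRingEnd ℂ) l := by linear_combination h
    have h3 := congrArg (norm : ℂ → ℝ) h2
    rw [norm_mul, habsμ2, Complex.norm_conj, one_mul] at h3
    norm_num at h3
    linarith
  -- nilpotent building blocks
  set x : Matrix (Fin (n' + 1)) (Fin (n' + 1)) ℂ := Complex.I • Nmat (n' + 1) with hxdef
  have hxn : x ^ (n' + 1) = 0 := by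
    rw [hxdef, smul_pow, Nmat_pow_n, smul_zero]
  have hxnil : IsNilpotent x := ⟨(n' + 1), hxn⟩
  set g : Matrix (Fin (n' + 1)) (Fin (n' + 1)) ℂ := ∑ k ∈ Finset.range (n' + 1), x ^ k with hgdef
  have hgeom : (1 - x) * g = 1 := by
    have h := mul_geom_sum x (n' + 1)
    have h2 : (1 - x) * g = -((x - 1) * g) := by noncomm_ring
    rw [h2, hgdef, h, hxn]
    noncomm_ring
  set K0 : Matrix (Fin (n' + 1)) (Fin (n' + 1)) ℂ := g * (1 + x) with hK0def
  set K : Matrix (Fin (n' + 1)) (Fin (n' + 1)) ℂ := μ ^ 2 • K0 with hKdef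
  set D : Matrix (Fin (n' + 1)) (Fin (n' + 1)) ℂ := μ • Dmat (n' + 1) with hDdef
  -- key identity Dᴴ * K = D
  have hc : star μ * μ ^ 2 = μ := by
    have h1 : μ * star μ = 1 := by
      rw [Complex.star_def, Complex.mul_conj, Complex.normSq_eq_norm_sq, hμ]
      norm_num
    calc star μ * μ ^ 2 = (μ * star μ) * μ := by ring
    _ = μ := by rw [h1, one_mul]
  have hDHK : Dᴴ * K = D := by
    rw [hDdef, conjTranspose_smul, Dmat_conjTranspose, Dmat_eq, hKdef]
    rw [Matrix.smul_mul, Matrix.mul_smul, smul_smul]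
    rw [hc, ← hxdef]
    congr 1
    rw [hK0def, Matrix.mul_assoc, ← Matrix.mul_assoc (1 - x), hgeom, Matrix.one_mul]
  -- nilpotency of K - μ²
  have hKnil : (K - μ ^ 2 • 1) ^ (n' + 1) = 0 := by
    set g' : Matrix (Fin (n' + 1)) (Fin (n' + 1)) ℂ := ∑ k ∈ Finset.range n', x ^ k with hg'def
    have hg : g = x * g' + 1 := by
      rw [hgdef, hg'def, geom_sum_succ]
    have hcommxg' : Commute x g' := by
      rw [hg'def]
      apply Commute.sum_right
      intro k _
      exact (Commute.refl x).pow_right k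
    set cmat : Matrix (Fin (n' + 1)) (Fin (n' + 1)) ℂ := 1 + g' * (1 + x) with hcmatdef
    have hK01 : K0 - 1 = x * cmat := by
      rw [hK0def, hg, hcmatdef]
      noncomm_ring
    have hcommxc : Commute x cmat := by
      rw [hcmatdef]
      exact (Commute.one_right x).add_right
        (hcommxg'.mul_right ((Commute.one_right x).add_right (Commute.refl x)))
    have h1 : (K0 - 1) ^ (n' + 1) = 0 := by
      rw [hK01, hcommxc.mul_pow, hxn, Matrix.zero_mul]
    have h2 : K - μ ^ 2 • 1 = μ ^ 2 • (K0 - 1) := by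
      rw [hKdef, smul_sub]
    rw [h2, smul_pow, h1, smul_zero]
  -- D is a unit
  have hDunit : IsUnit D := by
    have hF : IsUnit (Fmat (n' + 1)) := ⟨⟨Fmat (n' + 1), Fmat (n' + 1), Fmat_mul_Fmat, Fmat_mul_Fmat⟩, rfl⟩
    have h1x : IsUnit (1 + x) := hxnil.isUnit_one_add
    have hμ1 : IsUnit (μ • (1 : Matrix (Fin (n' + 1)) (Fin (n' + 1)) ℂ)) := by
      have h := (isUnit_iff_ne_zero.2 hμ0).map (algebraMap ℂ (Matrix (Fin (n' + 1)) (Fin (n' + 1)) ℂ))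
      rwa [Algebra.algebraMap_eq_smul_one] at h
    have h : D = (μ • 1) * (Fmat (n' + 1) * (1 + x)) := by
      rw [hDdef, Dmat_eq, Matrix.smul_mul, Matrix.one_mul, ← hxdef]
    rw [h]
    exact hμ1.mul (hF.mul h1x)
  obtain ⟨u, hu⟩ := hDunit
  have hDu : D * (↑u⁻¹ : Matrix (Fin (n' + 1)) (Fin (n' + 1)) ℂ) = 1 := by
    rw [← hu]; exact u.mul_inv
  -- the Sylvester operator
  set Hm := Hmat m l with hHmdef
  let φ : Matrix (Fin m ⊕ Fin m) (Fin (n' + 1)) ℂ →ₗ[ℂ] Matrix (Fin m ⊕ Fin m) (Fin (n' + 1)) ℂ :=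
    { toFun := fun S => Hm * S - Hmᴴ * S * K
      map_add' := by
        intro a b
        rw [Matrix.mul_add, Matrix.mul_add, Matrix.add_mul]
        abel
      map_smul' := by
        intro c a
        simp only [Matrix.mul_smul, Matrix.smul_mul, smul_sub, RingHom.id_apply] }
  have hφ : ∀ S, φ S = Hm * S - Hmᴴ * S * K := fun S => rfl
  -- injectivity of φ
  have hkey : ∀ S, φ S = 0 → S = 0 := by
    intro S hS0
    rw [hφ, sub_eq_zero] at hS0
    set S₁ := S.toRows₁ with hS₁def
    set S₂ := S.toRows₂ with hS₂def
    have hSrows : S = fromRows S₁ S₂ := (fromRows_toRows S).symm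
    have hHconj : Hmᴴ = fromBlocks 0 (Jmat m l)ᴴ 1 0 := by
      rw [hHmdef, Hmat, fromBlocks_conjTranspose]
      simp
    rw [hSrows, hHconj, hHmdef, Hmat, fromBlocks_mul_fromRows, fromBlocks_mul_fromRows,
      fromRows_mul] at hS0
    simp only [Matrix.zero_mul, Matrix.one_mul, Matrix.mul_zero, zero_add, add_zero] at hS0
    obtain ⟨h2, h1⟩ := (fromRows_ext_iff _ _ _ _).1 hS0
    -- h2 : S₂ = Jᴴ * S₂ * K,  h1 : J * S₁ = S₁ * K
    have hS₁0 : S₁ = 0 := by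
      have hs := sylv (Jmat m l) K S₁ (μ ^ 2) h1 (n' + 1)
      rw [hKnil, Matrix.mul_zero] at hs
      have hunit : IsUnit (Jmat m l - μ ^ 2 • 1) := by
        have h : Jmat m l - μ ^ 2 • 1 = (l - μ ^ 2) • 1 + Nmat m := by
          rw [Jmat_eq, sub_smul]; abel
        rw [h]
        exact unit_scalar_add_nilpotent hlμ2 _ ⟨m, Nmat_pow_n⟩
      exact unit_cancel (hunit.pow (n' + 1)) hs
    have hS₂0 : S₂ = 0 := by
      have hNTnil : IsNilpotent (Nmat m)ᵀ :=
        ⟨m, by rw [← transpose_pow, Nmat_pow_n, transpose_zero]⟩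
      have hJHunit : IsUnit (Jmat m l)ᴴ := by
        rw [Jmat_conjTranspose]
        exact unit_scalar_add_nilpotent hconjl _ hNTnil
      obtain ⟨w, hw⟩ := hJHunit
      have hwinv : (↑w⁻¹ : Matrix (Fin m) (Fin m) ℂ) * (Jmat m l)ᴴ = 1 := by
        rw [← hw]; exact w.inv_mul
      have hA2 : (↑w⁻¹ : Matrix (Fin m) (Fin m) ℂ) * S₂ = S₂ * K := by
        calc (↑w⁻¹ : Matrix (Fin m) (Fin m) ℂ) * S₂
            = (↑w⁻¹ : Matrix (Fin m) (Fin m) ℂ) * ((Jmat m l)ᴴ * S₂ * K) := by rw [← h2]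
          _ = ((↑w⁻¹ : Matrix (Fin m) (Fin m) ℂ) * (Jmat m l)ᴴ) * (S₂ * K) := by
              rw [Matrix.mul_assoc, Matrix.mul_assoc]
          _ = S₂ * K := by rw [hwinv, Matrix.one_mul]
      have hs := sylv (↑w⁻¹) K S₂ (μ ^ 2) hA2 (n' + 1)
      rw [hKnil, Matrix.mul_zero] at hs
      have hunit : IsUnit ((↑w⁻¹ : Matrix (Fin m) (Fin m) ℂ) - μ ^ 2 • 1) := by
        have hueq : (↑w⁻¹ : Matrix (Fin m) (Fin m) ℂ) - μ ^ 2 • 1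
            = (↑w⁻¹ : Matrix (Fin m) (Fin m) ℂ) * (1 - μ ^ 2 • (Jmat m l)ᴴ) := by
          rw [Matrix.mul_sub, Matrix.mul_one, Matrix.mul_smul]
          congr 1
          rw [hwinv]
        rw [hueq]
        apply (w⁻¹).isUnit.mul
        have h : (1 : Matrix (Fin m) (Fin m) ℂ) - μ ^ 2 • (Jmat m l)ᴴ
            = (1 - μ ^ 2 * (starRingEnd ℂ) l) • 1 + (-(μ ^ 2 • (Nmat m)ᵀ)) := by
          rw [Jmat_conjTranspose, smul_add, smul_smul, sub_smul, one_smul]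
          abel
        rw [h]
        exact unit_scalar_add_nilpotent h1μ2l _ (hNTnil.smul _).neg
      exact unit_cancel (hunit.pow (n' + 1)) hs
    rw [hSrows, hS₁0, hS₂0]
    ext i j
    cases i <;> rfl
  have hinj : Function.Injective φ := by
    intro a b hab
    have h := hkey (a - b) (by rw [map_sub, hab, sub_self])
    exact sub_eq_zero.1 h
  obtain ⟨S, hS⟩ := LinearMap.injective_iff_surjective.mp hinj (A - Bᴴ * K)
  rw [hφ] at hS
  -- assemble the solution
  refine ⟨S, (↑u⁻¹ : Matrix (Fin (n' + 1)) (Fin (n' + 1)) ℂ) * (B - Sᴴ * Hm), ?_, ?_⟩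
  · rw [← Matrix.mul_assoc, hDu, Matrix.one_mul]
    abel
  · have hRH : ((↑u⁻¹ : Matrix (Fin (n' + 1)) (Fin (n' + 1)) ℂ) * (B - Sᴴ * Hm))ᴴ
        = (Bᴴ - Hmᴴ * S) * (↑u⁻¹ : Matrix (Fin (n' + 1)) (Fin (n' + 1)) ℂ)ᴴ := by
      rw [conjTranspose_mul, conjTranspose_sub, conjTranspose_mul, conjTranspose_conjTranspose]
    have hED : (↑u⁻¹ : Matrix (Fin (n' + 1)) (Fin (n' + 1)) ℂ)ᴴ * D = K := by
      have h1 : (↑u⁻¹ : Matrix (Fin (n' + 1)) (Fin (n' + 1)) ℂ)ᴴ * Dᴴ = 1 := by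
        rw [← conjTranspose_mul, hDu, conjTranspose_one]
      calc (↑u⁻¹ : Matrix (Fin (n' + 1)) (Fin (n' + 1)) ℂ)ᴴ * D
          = (↑u⁻¹ : Matrix (Fin (n' + 1)) (Fin (n' + 1)) ℂ)ᴴ * (Dᴴ * K) := by rw [hDHK]
        _ = ((↑u⁻¹ : Matrix (Fin (n' + 1)) (Fin (n' + 1)) ℂ)ᴴ * Dᴴ) * K := by rw [Matrix.mul_assoc]
        _ = K := by rw [h1, Matrix.one_mul]
    rw [hRH, Matrix.mul_assoc, hED, Matrix.sub_mul]
    have h : A = Bᴴ * K + (Hm * S - Hmᴴ * S * K) := by rw [hS]; abel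
    rw [h]
    abel
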